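/- Let (X,≼) be a partial order that has a countable multi-utility, and let x, y ∈ X be incomparable (x ⋈ y). Then there exists a sequence (≼ₙ)ₙ≥₀ of partial orders on X with ≼₀ = ≼ and with ≼ₙ₊₁ extending ≼ₙ for all n ≥ 0, such that the limit ≼' = lim ≼ₙ is a Debreu separable linear extension of ≼ satisfying x ≼' y. -/
import Mathlib

/-- A binary relation is a partial order: reflexive, antisymmetric, transitive. -/
def IsPartialOrderRel {X : Type*} (r : X → X → Prop) : Prop :=
  (∀ x, r x x) ∧ (∀ x y, r x y → r y x → x = y) ∧ (∀ x y z, r x y → r y z → r x z)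

/-- `r'` extends `r`. -/
def RelExtends {X : Type*} (r r' : X → X → Prop) : Prop :=
  ∀ x y, r x y → r' x y

/-- `r` is total: any two elements are comparable. -/
def TotalRel {X : Type*} (r : X → X → Prop) : Prop :=
  ∀ x y, r x y ∨ r y x

/-- `r'` is a linear extension of `r`: a total partial order extending `r`. -/
def IsLinearExtension {X : Type*} (r r' : X → X → Prop) : Prop :=
  IsPartialOrderRel r' ∧ TotalRel r' ∧ RelExtends r r'

/-- `x` and `y` are incomparable with respect to `r`. -/
def Incomp {X : Type*} (r : X → X → Prop) (x y : X) : Prop :=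
  ¬ r x y ∧ ¬ r y x

/-- `D` is Debreu dense for `r`. -/
def DebreuDense {X : Type*} (r : X → X → Prop) (D : Set X) : Prop :=
  ∀ x y, r x y → ¬ r y x → ∃ d ∈ D, r x d ∧ r d y

/-- `(X, r)` is Debreu separable: it has a countable Debreu dense subset. -/
def DebreuSeparable {X : Type*} (r : X → X → Prop) : Prop :=
  ∃ D : Set X, D.Countable ∧ DebreuDense r D

/-- The limit of a sequence of binary relations. -/
def LimitRel {X : Type*} (r : ℕ → X → X → Prop) : X → X → Prop :=
  fun x y => ∃ n₀ : ℕ, ∀ n, n₀ ≤ n → r n x y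

section AuxLemmas

/-- Summability of base-3 digit sums. -/
lemma digits_summable (a : ℕ → ℝ) (ha : ∀ n, a n = 0 ∨ a n = 1) :
    Summable (fun n => (1/3:ℝ)^n * a n) := by
  refine Summable.of_nonneg_of_le (fun n => ?_) (fun n => ?_)
    (summable_geometric_of_lt_one (r := 1/3) (by norm_num) (by norm_num))
  · rcases ha n with h | h <;> rw [h] <;> simp
  · rcases ha n with h | h <;> rw [h] <;> simp

/-- Base-3 digit comparison: if the digit sequences agree below `N`, and at `N`
`a N = 1` while `b N = 0`, then the digit sum of `b` is strictly smaller. -/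
lemma digits_lt (a b : ℕ → ℝ) (ha : ∀ n, a n = 0 ∨ a n = 1) (hb : ∀ n, b n = 0 ∨ b n = 1)
    (N : ℕ) (hag : ∀ m < N, a m = b m) (haN : a N = 1) (hbN : b N = 0) :
    ∑' n, (1/3:ℝ)^n * b n < ∑' n, (1/3:ℝ)^n * a n := by
  have hsa := digits_summable a ha
  have hsb := digits_summable b hb
  have hsg : Summable (fun n : ℕ => (1/3:ℝ)^n) :=
    summable_geometric_of_lt_one (by norm_num) (by norm_num)
  have hfin : ∑ i ∈ Finset.range (N+1), (1/3:ℝ)^i * b i + (1/3:ℝ)^N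
      = ∑ i ∈ Finset.range (N+1), (1/3:ℝ)^i * a i := by
    rw [Finset.sum_range_succ, Finset.sum_range_succ, haN, hbN]
    have h2 : ∑ i ∈ Finset.range N, (1/3:ℝ)^i * b i = ∑ i ∈ Finset.range N, (1/3:ℝ)^i * a i :=
      Finset.sum_congr rfl (fun i hi => by rw [hag i (Finset.mem_range.mp hi)])
    rw [h2]; ring
  have h1 : ∑' n : ℕ, (1/3:ℝ)^(n + (N+1)) = (1/3:ℝ)^(N+1) * (3/2) := by
    have h0 : (fun n : ℕ => (1/3:ℝ)^(n + (N+1))) = fun n : ℕ => (1/3:ℝ)^n * (1/3:ℝ)^(N+1) := by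
      funext n; rw [pow_add]
    rw [h0, tsum_mul_right, tsum_geometric_of_lt_one (by norm_num) (by norm_num)]
    ring
  have hsb' : Summable (fun n => (1/3:ℝ)^(n + (N+1)) * b (n + (N+1))) :=
    (summable_nat_add_iff (f := fun n => (1/3:ℝ)^n * b n) (N+1)).2 hsb
  have hsa' : Summable (fun n => (1/3:ℝ)^(n + (N+1)) * a (n + (N+1))) :=
    (summable_nat_add_iff (f := fun n => (1/3:ℝ)^n * a n) (N+1)).2 hsa
  have hsg' : Summable (fun n : ℕ => (1/3:ℝ)^(n + (N+1))) :=
    (summable_nat_add_iff (f := fun n : ℕ => (1/3:ℝ)^n) (N+1)).2 hsg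
  have htail_b : ∑' n, (1/3:ℝ)^(n + (N+1)) * b (n + (N+1)) ≤ (1/3:ℝ)^N * (1/2) := by
    have hle : ∑' n, (1/3:ℝ)^(n + (N+1)) * b (n + (N+1)) ≤ ∑' n : ℕ, (1/3:ℝ)^(n + (N+1)) := by
      refine Summable.tsum_le_tsum (fun n => ?_) hsb' hsg'
      rcases hb (n + (N+1)) with h | h <;> rw [h] <;> simp
    rw [h1] at hle
    calc ∑' n, (1/3:ℝ)^(n + (N+1)) * b (n + (N+1)) ≤ (1/3:ℝ)^(N+1) * (3/2) := hle
      _ = (1/3:ℝ)^N * (1/2) := by rw [pow_succ]; ring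
  have htail_a : 0 ≤ ∑' n, (1/3:ℝ)^(n + (N+1)) * a (n + (N+1)) := by
    refine tsum_nonneg (fun n => ?_)
    rcases ha (n + (N+1)) with h | h <;> rw [h] <;> simp
  have hN : (0:ℝ) < (1/3:ℝ)^N := by positivity
  rw [← Summable.sum_add_tsum_nat_add (N+1) hsa, ← Summable.sum_add_tsum_nat_add (N+1) hsb]
  linarith

/-- Any order on `X` pulled back from `ℝ` along an injective map is Debreu separable. -/
lemma debreuSep_of_real {X : Type*} (x0 : X) (v : X → ℝ) (hinj : Function.Injective v) :
    DebreuSeparable (fun a b : X => v a ≤ v b) := by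
  classical
  let pick : ℚ × ℚ → X := fun pq =>
    if h : ∃ z, (pq.1:ℝ) < v z ∧ v z < (pq.2:ℝ) then h.choose else x0
  have hpick : ∀ p q : ℚ, (h : ∃ z, (p:ℝ) < v z ∧ v z < (q:ℝ)) →
      (p:ℝ) < v (pick (p,q)) ∧ v (pick (p,q)) < (q:ℝ) := by
    intro p q h
    simp only [pick, dif_pos h]
    exact h.choose_spec
  let D2 : Set X := {a | ∃ t : ℝ, v a < t ∧ ∀ z, v a < v z → ¬ v z < t}
  let qf : X → ℚ := fun a =>
    if h : a ∈ D2 then (exists_rat_btwn h.choose_spec.1).choose else 0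
  have hqf : ∀ a, (h : a ∈ D2) → v a < (qf a : ℝ) ∧
      ∀ z, v a < v z → (qf a : ℝ) < v z := by
    intro a h
    have hs := h.choose_spec
    have hq := (exists_rat_btwn hs.1).choose_spec
    refine ⟨?_, ?_⟩
    · simp only [qf, dif_pos h]; exact hq.1
    · intro z hz
      have h3 := hs.2 z hz
      simp only [qf, dif_pos h]
      calc ((exists_rat_btwn hs.1).choose : ℝ) < h.choose := hq.2
        _ ≤ v z := not_lt.mp h3
  have hD2 : D2.Countable := by
    apply Set.countable_of_injective_of_countable_image (f := qf)
    · intro a ha a' ha' heq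
      by_contra hne
      have hv : v a ≠ v a' := fun h => hne (hinj h)
      have heq' : (qf a : ℝ) = (qf a' : ℝ) := by exact_mod_cast congrArg (fun q : ℚ => (q:ℝ)) heq
      rcases hv.lt_or_gt with hlt | hlt
      · have h1 := (hqf a ha).2 a' hlt
        have h2 := (hqf a' ha').1
        linarith
      · have h1 := (hqf a' ha').2 a hlt
        have h2 := (hqf a ha).1
        linarith
    · exact (Set.to_countable _)
  refine ⟨Set.range pick ∪ D2, (Set.countable_range pick).union hD2, ?_⟩
  intro a b hab hnba
  have hab' : v a < v b := not_le.mp hnba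
  by_cases h : ∃ z, v a < v z ∧ v z < v b
  · obtain ⟨z, hz1, hz2⟩ := h
    obtain ⟨p, hp1, hp2⟩ := exists_rat_btwn hz1
    obtain ⟨q, hq1, hq2⟩ := exists_rat_btwn hz2
    have hex : ∃ w, (p:ℝ) < v w ∧ v w < (q:ℝ) := ⟨z, hp2, hq1⟩
    obtain ⟨h1, h2⟩ := hpick p q hex
    exact ⟨pick (p,q), Or.inl (Set.mem_range_self _), le_of_lt (hp1.trans h1),
      le_of_lt (h2.trans hq2)⟩
  · push_neg at h
    exact ⟨a, Or.inr ⟨v b, hab', fun z hz => not_lt.mpr (h z hz)⟩, le_refl _, hab⟩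

end AuxLemmas

theorem countable_multiUtility_limit_debreuSeparable_linearExtension {X : Type*}
    (r : X → X → Prop) (hr : IsPartialOrderRel r)
    (I : Type*) [Countable I] (u : I → X → ℝ)
    (hu : ∀ x y, r x y ↔ ∀ i, u i x ≤ u i y)
    (x y : X) (hxy : Incomp r x y) :
    ∃ S : ℕ → X → X → Prop,
      (∀ n, IsPartialOrderRel (S n)) ∧
      S 0 = r ∧
      (∀ n, RelExtends (S n) (S (n + 1))) ∧
      IsLinearExtension r (LimitRel S) ∧
      DebreuSeparable (LimitRel S) ∧
      LimitRel S x y := by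
  classical
  obtain ⟨hrefl, hanti, htrans⟩ := hr
  -- I is nonempty (else r is total, contradicting incomparability)
  have hI : Nonempty I := by
    by_contra h
    rw [not_nonempty_iff] at h
    exact hxy.1 ((hu x y).2 (fun i => (h.false i).elim))
  obtain ⟨e, he⟩ := exists_surjective_nat (I × ℚ)
  -- the countable family of up-closed sets
  let g : ℕ → Set X := fun n =>
    Nat.casesOn n {z | ¬ r z x} (fun m => {z | ((e m).2 : ℝ) < u (e m).1 z})
  -- digit functions
  let dgt : X → ℕ → ℝ := fun z n => Set.indicator (g n) (fun _ => 1) z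
  have hdmem : ∀ z n, z ∈ g n → dgt z n = 1 := fun z n h => Set.indicator_of_mem h _
  have hdnot : ∀ z n, z ∉ g n → dgt z n = 0 := fun z n h => Set.indicator_of_notMem h _
  have hd01 : ∀ z n, dgt z n = 0 ∨ dgt z n = 1 := by
    intro z n
    rcases Classical.em (z ∈ g n) with h | h
    · right; exact hdmem z n h
    · left; exact hdnot z n h
  -- the real-valued function
  let v : X → ℝ := fun z => ∑' n, (1/3:ℝ)^n * dgt z n
  -- each `g n` is up-closed
  have hup : ∀ n z w, r z w → z ∈ g n → w ∈ g n := by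
    intro n z w hzw hz
    cases n with
    | zero =>
      intro hwx
      exact hz (htrans _ _ _ hzw hwx)
    | succ m =>
      have := (hu z w).1 hzw (e m).1
      exact lt_of_lt_of_le hz this
  -- digit-wise monotonicity gives monotonicity of v
  have hmono : ∀ z w, r z w → v z ≤ v w := by
    intro z w hzw
    refine Summable.tsum_le_tsum (fun n => ?_) (digits_summable _ (hd01 z)) (digits_summable _ (hd01 w))
    have hdle : dgt z n ≤ dgt w n := by
      rcases Classical.em (z ∈ g n) with h | h
      · rw [hdmem z n h, hdmem w n (hup n z w hzw h)]
      · rw [hdnot z n h]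
        rcases hd01 w n with h' | h' <;> rw [h'] <;> norm_num
    have : (0:ℝ) ≤ (1/3:ℝ)^n := by positivity
    exact mul_le_mul_of_nonneg_left hdle this
  -- separation of strictly incomparable pairs
  have hsep : ∀ z w, ¬ r z w → ∃ n, z ∈ g n ∧ w ∉ g n := by
    intro z w hzw
    have : ¬ ∀ i, u i z ≤ u i w := fun h => hzw ((hu z w).2 h)
    push_neg at this
    obtain ⟨i, hi⟩ := this
    obtain ⟨q, hq1, hq2⟩ := exists_rat_btwn hi
    obtain ⟨m, hm⟩ := he (i, q)
    refine ⟨m + 1, ?_, ?_⟩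
    · show ((e m).2 : ℝ) < u (e m).1 z
      rw [hm]; exact hq2
    · show ¬ ((e m).2 : ℝ) < u (e m).1 w
      rw [hm]; exact not_lt.mpr hq1.le
  -- strict inequality from a first digit difference
  have hvlt : ∀ z w, (∃ n, (z ∉ g n ∧ w ∈ g n) ∧ ∀ m, m < n → (z ∈ g m ↔ w ∈ g m)) →
      v z < v w := by
    intro z w ⟨n, ⟨hzn, hwn⟩, hagree⟩
    refine digits_lt (dgt w) (dgt z) (hd01 w) (hd01 z) n ?_ ?_ ?_
    · intro m hm
      rcases (hagree m hm) with ⟨h1, h2⟩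
      rcases Classical.em (z ∈ g m) with h | h
      · rw [hdmem z m h, hdmem w m (h1 h)]
      · rw [hdnot z m h, hdnot w m (fun hw => h (h2 hw))]
    · exact hdmem w n hwn
    · exact hdnot z n hzn
  -- injectivity of v
  have hinj : Function.Injective v := by
    intro z w hvz
    by_contra hne
    have hdiff : ∃ n, ¬ (z ∈ g n ↔ w ∈ g n) := by
      have h1 : ¬ r z w ∨ ¬ r w z := by
        by_contra h
        push_neg at h
        exact hne (hanti _ _ h.1 h.2)
      rcases h1 with h1 | h1
      · obtain ⟨n, hz, hw⟩ := hsep z w h1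
        exact ⟨n, fun hiff => hw (hiff.1 hz)⟩
      · obtain ⟨n, hw, hz⟩ := hsep w z h1
        exact ⟨n, fun hiff => hz (hiff.2 hw)⟩
    haveI : DecidablePred (fun n => ¬ (z ∈ g n ↔ w ∈ g n)) :=
      fun n => Classical.propDecidable _
    let N := Nat.find hdiff
    have hN : ¬ (z ∈ g N ↔ w ∈ g N) := Nat.find_spec hdiff
    have hagree : ∀ m, m < N → (z ∈ g m ↔ w ∈ g m) := by
      intro m hm
      by_contra hc
      exact Nat.find_min hdiff hm hc
    rcases Classical.em (z ∈ g N) with hz | hz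
    · have hw : w ∉ g N := fun hw => hN ⟨fun _ => hw, fun _ => hz⟩
      have := hvlt w z ⟨N, ⟨hw, hz⟩, fun m hm => (hagree m hm).symm⟩
      exact absurd hvz (ne_of_gt this)
    · have hw : w ∈ g N := by
        by_contra hw
        exact hN ⟨fun h => absurd h hz, fun h => absurd h hw⟩
      have := hvlt z w ⟨N, ⟨hz, hw⟩, hagree⟩
      exact absurd hvz (ne_of_lt this)
  -- v x < v y
  have hxylt : v x < v y := by
    refine hvlt x y ⟨0, ⟨?_, ?_⟩, fun m hm => absurd hm (Nat.not_lt_zero m)⟩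
    · show ¬ ¬ r x x
      exact fun h => h (hrefl x)
    · exact hxy.2
  -- the linear extension
  let r' : X → X → Prop := fun a b => v a ≤ v b
  have hr'po : IsPartialOrderRel r' := by
    refine ⟨fun a => le_refl _, fun a b h1 h2 => hinj (le_antisymm h1 h2),
      fun a b c h1 h2 => le_trans h1 h2⟩
  -- the sequence
  refine ⟨fun n => Nat.casesOn n r (fun _ => r'), ?_, rfl, ?_, ?_, ?_, ?_⟩
  · intro n
    cases n with
    | zero => exact ⟨hrefl, hanti, htrans⟩
    | succ m => exact hr'po
  · intro n
    cases n with
    | zero => exact fun a b hab => hmono a b hab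
    | succ m => exact fun a b hab => hab
  all_goals {
    have hLim : LimitRel (fun n => Nat.casesOn n r (fun _ => r') : ℕ → X → X → Prop) = r' := by
      funext a b
      apply propext
      constructor
      · rintro ⟨n₀, h⟩
        exact h (n₀ + 1) (Nat.le_succ n₀)
      · intro h
        exact ⟨1, fun n hn => by
          cases n with
          | zero => omega
          | succ m => exact h⟩
    rw [hLim]
    first
    | exact ⟨hr'po, fun a b => le_total _ _, fun a b hab => hmono a b hab⟩
    | exact debreuSep_of_real x v hinj
    | exact le_of_lt hxylt
  }
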